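/- Let E0 > 0 and fix ω > E0. There exist γ0 > 0 and μ0 > 0 such that for all γ ∈ (0, γ0) and μ ∈ (0, μ0) for which the cubic f(P) = P(P−1)² + αP − β has three distinct real roots P1 < P2 < P3, the function D_P with P = P2 (the middle root) has a zero s ∈ ℂ with Re s > 0. (Linear instability of the harmonic solution with intermediate response.) -/

import Mathlib

/-- Principal complex square root (branch cut on the negative real axis,
`√r > 0` for `r > 0`). -/
noncomputable def csqrt (z : ℂ) : ℂ := z ^ ((1:ℂ)/2)

/-- `S₋(z) = e^{iπ/4} √(-iz)`: square root with branch cut on the negative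
imaginary axis. -/
noncomputable def Sminus (z : ℂ) : ℂ :=
  Complex.exp (Complex.I * Real.pi / 4) * csqrt (-Complex.I * z)

/-- `S₊(z) = e^{-iπ/4} √(iz)`: square root with branch cut on the positive
imaginary axis. -/
noncomputable def Splus (z : ℂ) : ℂ :=
  Complex.exp (-Complex.I * Real.pi / 4) * csqrt (Complex.I * z)

/-- `p̂(s) = 1/(ω + is + 2i S₋(ω + is))`. -/
noncomputable def phat (ω : ℝ) (s : ℂ) : ℂ :=
  1 / ((ω : ℂ) + Complex.I * s + 2 * Complex.I * Sminus ((ω : ℂ) + Complex.I * s))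

/-- `q̂(s) = 1/(ω - is - 2i S₊(ω - is))`. -/
noncomputable def qhat (ω : ℝ) (s : ℂ) : ℂ :=
  1 / ((ω : ℂ) - Complex.I * s - 2 * Complex.I * Splus ((ω : ℂ) - Complex.I * s))

/-- `σ = ω - E0 - γ²/(ω+4)`. -/
noncomputable def sigmaPar (E0 γ ω : ℝ) : ℝ := ω - E0 - γ^2 / (ω + 4)

/-- The stability determinant
`D_P(s) = 3σ²P² - 4σP(ω - E0 - (γ²/2)(p̂ + q̂)) + (ω - E0 - is - γ²q̂)(ω - E0 + is - γ²p̂)`. -/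
noncomputable def Dfun (E0 γ ω P : ℝ) (s : ℂ) : ℂ :=
  3 * (sigmaPar E0 γ ω : ℂ)^2 * (P : ℂ)^2
    - 4 * (sigmaPar E0 γ ω : ℂ) * (P : ℂ) *
        (((ω - E0 : ℝ) : ℂ) - ((γ : ℂ)^2 / 2) * (phat ω s + qhat ω s))
    + (((ω - E0 : ℝ) : ℂ) - Complex.I * s - (γ : ℂ)^2 * qhat ω s) *
      (((ω - E0 : ℝ) : ℂ) + Complex.I * s - (γ : ℂ)^2 * phat ω s)

/-- `α(ω; γ, E0) = 4γ⁴/(ω σ² ρ²)`. -/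
noncomputable def alphaPar (E0 γ ω : ℝ) : ℝ :=
  4 * γ^4 / (ω * (sigmaPar E0 γ ω)^2 * (ω + 4)^2)

/-- `β(ω; γ, μ, E0) = 4γ²μ/(σ³ ρ)`. -/
noncomputable def betaPar (E0 γ μ ω : ℝ) : ℝ :=
  4 * γ^2 * μ / ((sigmaPar E0 γ ω)^3 * (ω + 4))

/-- The cubic polynomial `f(P) = P(P-1)² + αP - β`. -/
noncomputable def cubicF (α β P : ℝ) : ℝ := P * (P - 1)^2 + α * P - β

open Complex

lemma csqrt_sq (z : ℂ) : csqrt z ^ 2 = z := by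
  unfold csqrt
  by_cases hz : z = 0
  · simp [hz, zero_cpow (by norm_num : (1:ℂ)/2 ≠ 0)]
  · rw [sq, ← cpow_add _ _ hz]; norm_num

lemma exp_quarter_sq : Complex.exp (Complex.I * Real.pi / 4) ^ 2 = Complex.I := by
  rw [sq, ← Complex.exp_add]
  have h : Complex.I * (Real.pi:ℂ) / 4 + Complex.I * (Real.pi:ℂ) / 4
      = ((Real.pi/2 : ℝ):ℂ) * Complex.I := by push_cast; ring
  rw [h, Complex.exp_mul_I]
  simp [← Complex.ofReal_cos, ← Complex.ofReal_sin]

lemma exp_neg_quarter_sq : Complex.exp (-Complex.I * Real.pi / 4) ^ 2 = -Complex.I := by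
  rw [sq, ← Complex.exp_add]
  have h : -Complex.I * (Real.pi:ℂ) / 4 + -Complex.I * (Real.pi:ℂ) / 4
      = ((-(Real.pi/2) : ℝ):ℂ) * Complex.I := by push_cast; ring
  rw [h, Complex.exp_mul_I]
  simp [← Complex.ofReal_cos, ← Complex.ofReal_sin]

lemma Sminus_sq (z : ℂ) : Sminus z ^ 2 = z := by
  unfold Sminus
  rw [mul_pow, exp_quarter_sq, csqrt_sq]
  simp [← mul_assoc, Complex.I_mul_I]

lemma Splus_sq (z : ℂ) : Splus z ^ 2 = z := by
  unfold Splus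
  rw [mul_pow, exp_neg_quarter_sq, csqrt_sq]
  simp [← mul_assoc, Complex.I_mul_I]

lemma conj_csqrt (z : ℂ) (h : z.arg ≠ Real.pi) :
    (starRingEnd ℂ) (csqrt z) = csqrt ((starRingEnd ℂ) z) := by
  unfold csqrt
  have := Complex.conj_cpow z ((1:ℂ)/2) h
  rw [show (starRingEnd ℂ) ((1:ℂ)/2) = (1:ℂ)/2 by simp [map_ofNat, map_div₀]] at this
  rw [← this]

lemma conj_Sminus (z : ℂ) (h : z.re ≠ 0) :
    (starRingEnd ℂ) (Sminus z) = Splus ((starRingEnd ℂ) z) := by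
  unfold Sminus Splus
  have harg : (-Complex.I * z).arg ≠ Real.pi := by
    intro hp
    rw [Complex.arg_eq_pi_iff] at hp
    simp at hp
    exact h hp.2
  rw [map_mul, conj_csqrt _ harg]
  have h1 : (starRingEnd ℂ) (Complex.exp (Complex.I * ↑Real.pi / 4)) =
      Complex.exp (-Complex.I * ↑Real.pi / 4) := by
    rw [← Complex.exp_conj]
    congr 1
    simp [map_div₀, map_ofNat]
  have h2 : (starRingEnd ℂ) (-Complex.I * z) = Complex.I * (starRingEnd ℂ) z := by simp
  rw [h1, h2]

lemma conj_phat (ω : ℝ) (hω : 0 < ω) (s : ℝ) :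
    (starRingEnd ℂ) (phat ω ↑s) = qhat ω ↑s := by
  unfold phat qhat
  have hre : ((ω:ℂ) + Complex.I * (s:ℂ)).re ≠ 0 := by simp [hω.ne']
  rw [map_div₀, map_one, map_add, map_add, map_mul, map_mul, map_mul,
    conj_Sminus _ hre]
  have hcz : (starRingEnd ℂ) ((ω:ℂ) + Complex.I * (s:ℂ)) = (ω:ℂ) - Complex.I * (s:ℂ) := by
    rw [map_add, map_mul, Complex.conj_I, Complex.conj_ofReal, Complex.conj_ofReal]; ring
  rw [hcz, Complex.conj_I, Complex.conj_ofReal, map_ofNat]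
  simp only [Complex.conj_ofReal]
  ring_nf

lemma conj_qhat (ω : ℝ) (hω : 0 < ω) (s : ℝ) :
    (starRingEnd ℂ) (qhat ω ↑s) = phat ω ↑s := by
  rw [← conj_phat ω hω s, Complex.conj_conj]

lemma phat_denom_ne (ω : ℝ) (hω : 0 < ω) (s : ℝ) :
    (ω : ℂ) + Complex.I * (s:ℂ) + 2 * Complex.I * Sminus ((ω : ℂ) + Complex.I * (s:ℂ)) ≠ 0 := by
  set w := Sminus ((ω : ℂ) + Complex.I * (s:ℂ)) with hwdef
  have hw2 : w ^ 2 = (ω : ℂ) + Complex.I * (s:ℂ) := Sminus_sq _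
  have hfac : (ω : ℂ) + Complex.I * (s:ℂ) + 2 * Complex.I * w = w * (w + 2 * Complex.I) := by
    linear_combination (-1 : ℂ) * hw2
  rw [hfac]
  apply mul_ne_zero
  · intro h0
    have : ((ω : ℂ) + Complex.I * (s:ℂ)).re = 0 := by rw [← hw2, h0]; simp
    simp at this
    exact hω.ne' this
  · intro h0
    have hw : w = -(2 * Complex.I) := by linear_combination h0
    rw [hw] at hw2
    have h4 : ((-4 : ℂ)) = (ω : ℂ) + Complex.I * (s:ℂ) := by rw [← hw2]; ring_nf; rw [Complex.I_sq]; ring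
    have := congrArg Complex.re h4
    simp at this
    linarith

lemma abs_phat_le (ω : ℝ) (hω : 0 < ω) (s : ℝ) :
    ‖phat ω ↑s‖ ≤ (Real.sqrt ω + 2) / (Real.sqrt ω * (ω + 4)) := by
  have hsq : 0 < Real.sqrt ω := Real.sqrt_pos.mpr hω
  have hsq2 : Real.sqrt ω ^ 2 = ω := Real.sq_sqrt hω.le
  set w := Sminus ((ω : ℂ) + Complex.I * (s:ℂ)) with hwdef
  have hw2 : w ^ 2 = (ω : ℂ) + Complex.I * (s:ℂ) := Sminus_sq _
  set a := ‖w‖ with hadef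
  have ha0 : 0 ≤ a := norm_nonneg w
  have ha : Real.sqrt ω ≤ a := by
    have h1 : a ^ 2 = ‖(ω : ℂ) + Complex.I * (s:ℂ)‖ := by
      rw [hadef, ← norm_pow, hw2]
    have h2 : ω ≤ ‖(ω : ℂ) + Complex.I * (s:ℂ)‖ := by
      have hre : ((ω : ℂ) + Complex.I * (s:ℂ)).re = ω := by simp
      calc ω = ((ω : ℂ) + Complex.I * (s:ℂ)).re := hre.symm
        _ ≤ ‖_‖ := Complex.re_le_norm _
    nlinarith
  have hapos : 0 < a := lt_of_lt_of_le hsq ha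
  set b := ‖w + 2*Complex.I‖ with hbdef
  have hb0 : 0 ≤ b := norm_nonneg _
  have hb : ω + 4 ≤ b * (a + 2) := by
    have hmul : b * ‖w - 2*Complex.I‖ = ‖w^2 + 4‖ := by
      rw [hbdef, ← norm_mul]; congr 1; ring_nf; rw [Complex.I_sq]; ring
    have h4 : ω + 4 ≤ ‖w^2 + 4‖ := by
      have hre : (w^2 + 4).re = ω + 4 := by rw [hw2]; simp
      calc ω + 4 = (w^2 + 4).re := hre.symm
        _ ≤ ‖_‖ := Complex.re_le_norm _
    have hsub : ‖w - 2*Complex.I‖ ≤ a + 2 := by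
      calc ‖w - 2*Complex.I‖ ≤ ‖w‖ + ‖2*Complex.I‖ := by
            exact norm_sub_le w (2*Complex.I)
        _ = a + 2 := by simp [hadef]
    calc ω + 4 ≤ b * ‖w - 2*Complex.I‖ := by rw [hmul]; exact h4
      _ ≤ b * (a + 2) := by apply mul_le_mul_of_nonneg_left hsub hb0
  have hbpos : 0 < b := by nlinarith
  have hden : ‖(ω : ℂ) + Complex.I * (s:ℂ)
      + 2 * Complex.I * Sminus ((ω : ℂ) + Complex.I * (s:ℂ))‖ = a * b := by
    have hfac : (ω : ℂ) + Complex.I * (s:ℂ) + 2 * Complex.I * w = w * (w + 2 * Complex.I) := by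
      linear_combination (-1 : ℂ) * hw2
    rw [← hwdef, hfac, norm_mul]
  unfold phat
  rw [norm_div, norm_one, hden]
  rw [div_le_div_iff₀ (by positivity) (by positivity)]
  have key : Real.sqrt ω * (ω + 4) * (a + 2) ≤ (Real.sqrt ω + 2) * (a * b) * (a + 2) := by
    have k1 : Real.sqrt ω * (a + 2) ≤ (Real.sqrt ω + 2) * a := by nlinarith
    have k2 : Real.sqrt ω * (ω + 4) * (a + 2) ≤ (Real.sqrt ω + 2) * a * (ω + 4) := by nlinarith
    have k3 : (Real.sqrt ω + 2) * a * (ω + 4) ≤ (Real.sqrt ω + 2) * a * (b * (a + 2)) := by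
      apply mul_le_mul_of_nonneg_left hb (by positivity)
    calc Real.sqrt ω * (ω + 4) * (a + 2) ≤ (Real.sqrt ω + 2) * a * (ω + 4) := k2
      _ ≤ (Real.sqrt ω + 2) * a * (b * (a + 2)) := k3
      _ = (Real.sqrt ω + 2) * (a * b) * (a + 2) := by ring
  have := le_of_mul_le_mul_right (by linarith [key] : 1 * (Real.sqrt ω * (ω + 4)) * (a + 2) ≤ (Real.sqrt ω + 2) * (a * b) * (a + 2)) (by linarith : (0:ℝ) < a + 2)
  linarith

lemma abs_qhat_le (ω : ℝ) (hω : 0 < ω) (s : ℝ) :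
    ‖qhat ω ↑s‖ ≤ (Real.sqrt ω + 2) / (Real.sqrt ω * (ω + 4)) := by
  rw [← conj_phat ω hω s, Complex.norm_conj]
  exact abs_phat_le ω hω s

lemma continuous_phat (ω : ℝ) (hω : 0 < ω) : Continuous fun s : ℝ => phat ω ↑s := by
  have hS : Continuous fun s : ℝ => Sminus ((ω : ℂ) + Complex.I * (s:ℂ)) := by
    unfold Sminus csqrt
    apply Continuous.mul continuous_const
    apply Continuous.cpow _ continuous_const
    · intro s
      rw [Complex.mem_slitPlane_iff]
      right
      simp
      exact hω.ne'
    · fun_prop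
  have hden : Continuous fun s : ℝ => (ω : ℂ) + Complex.I * (s:ℂ)
      + 2 * Complex.I * Sminus ((ω : ℂ) + Complex.I * (s:ℂ)) := by
    apply Continuous.add (by fun_prop) (continuous_const.mul hS)
  unfold phat
  exact Continuous.div continuous_const hden (fun s => phat_denom_ne ω hω s)

lemma continuous_qhat (ω : ℝ) (hω : 0 < ω) : Continuous fun s : ℝ => qhat ω ↑s := by
  have : (fun s : ℝ => qhat ω ↑s) = fun s : ℝ => (starRingEnd ℂ) (phat ω ↑s) :=
    funext fun s => (conj_phat ω hω s).symm
  rw [this]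
  exact continuous_conj.comp (continuous_phat ω hω)


lemma im_Dfun_real (E0 γ ω P : ℝ) (hω : 0 < ω) (s : ℝ) :
    (Dfun E0 γ ω P ↑s).im = 0 := by
  rw [← Complex.conj_eq_iff_im]
  unfold Dfun
  simp only [map_add, map_sub, map_mul, map_pow, map_div₀, map_ofNat, Complex.conj_ofReal,
    Complex.conj_I, conj_phat ω hω s, conj_qhat ω hω s, map_one]
  ring

lemma middle_root (α β P1 P2 P3 : ℝ) (h12 : P1 < P2) (h23 : P2 < P3)
    (e1 : cubicF α β P1 = 0) (e2 : cubicF α β P2 = 0) (e3 : cubicF α β P3 = 0) :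
    3*P2^2 - 4*P2 + 1 + α = (P2 - P1)*(P2 - P3) := by
  unfold cubicF at e1 e2 e3
  have h12' : P2 - P1 ≠ 0 := sub_ne_zero.mpr h12.ne'
  have h23' : P3 - P2 ≠ 0 := sub_ne_zero.mpr h23.ne'
  have h13' : P1 - P3 ≠ 0 := sub_ne_zero.mpr (h12.trans h23).ne
  have hQ12 : P1^2 + P1*P2 + P2^2 - 2*P1 - 2*P2 + 1 + α = 0 := by
    have hf : (P2 - P1) * (P1^2 + P1*P2 + P2^2 - 2*P1 - 2*P2 + 1 + α) = 0 := by
      linear_combination e2 - e1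
    exact (mul_eq_zero.mp hf).resolve_left h12'
  have hQ23 : P2^2 + P2*P3 + P3^2 - 2*P2 - 2*P3 + 1 + α = 0 := by
    have hf : (P3 - P2) * (P2^2 + P2*P3 + P3^2 - 2*P2 - 2*P3 + 1 + α) = 0 := by
      linear_combination e3 - e2
    exact (mul_eq_zero.mp hf).resolve_left h23'
  have hsum : P1 + P2 + P3 - 2 = 0 := by
    have hf : (P1 - P3) * (P1 + P2 + P3 - 2) = 0 := by linear_combination hQ12 - hQ23
    exact (mul_eq_zero.mp hf).resolve_left h13'
  linear_combination hQ12 + (P2 - P1) * hsum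

lemma Dfun_zero (E0 γ ω P : ℝ) (hω : 0 < ω) :
    (Dfun E0 γ ω P 0).re
      = (sigmaPar E0 γ ω)^2 * (3*P^2 - 4*P + 1) + 4*γ^4/(ω*(ω+4)^2) := by
  have hρ : (0:ℝ) < ω + 4 := by linarith
  -- Sminus ω is real with square ω
  obtain ⟨c, hc, hc2⟩ : ∃ c : ℝ, Sminus ((ω:ℂ)) = (c:ℂ) ∧ c^2 = ω := by
    have hw2 : Sminus ((ω:ℂ)) ^ 2 = (ω:ℂ) := Sminus_sq _
    have hs2 : ((Real.sqrt ω : ℝ) : ℂ)^2 = (ω:ℂ) := by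
      norm_cast; exact_mod_cast Real.sq_sqrt hω.le
    have hfac : (Sminus ((ω:ℂ)) - (Real.sqrt ω : ℝ)) * (Sminus ((ω:ℂ)) + (Real.sqrt ω : ℝ)) = 0 := by
      linear_combination hw2 - hs2
    rcases mul_eq_zero.mp hfac with h | h
    · exact ⟨Real.sqrt ω, by linear_combination h, Real.sq_sqrt hω.le⟩
    · refine ⟨-Real.sqrt ω, ?_, by rw [neg_pow]; simp [Real.sq_sqrt hω.le]⟩
      push_cast
      linear_combination h
  have hc0 : c ≠ 0 := by
    intro h; rw [h] at hc2; simp at hc2; linarith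
  have hu : ((ω:ℂ) + 2 * Complex.I * c) ≠ 0 := by
    intro h
    have := congrArg Complex.re h
    simp at this
    linarith
  have hv : ((ω:ℂ) - 2 * Complex.I * c) ≠ 0 := by
    intro h
    have := congrArg Complex.re h
    simp at this
    linarith
  have hp0 : phat ω 0 = 1 / ((ω:ℂ) + 2 * Complex.I * c) := by
    unfold phat
    rw [show Complex.I * (0:ℂ) = 0 by ring, add_zero, hc]
  have hq0 : qhat ω 0 = 1 / ((ω:ℂ) - 2 * Complex.I * c) := by
    have hcast : ((0:ℝ):ℂ) = (0:ℂ) := by norm_cast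
    have h := conj_phat ω hω 0
    rw [hcast] at h
    rw [← h, hp0, map_div₀, map_one, map_add, map_mul, map_mul, Complex.conj_I,
      Complex.conj_ofReal, Complex.conj_ofReal, map_ofNat]
    ring_nf
  have hcc : ((c:ℂ))^2 = (ω:ℂ) := by exact_mod_cast congrArg (fun x : ℝ => (x:ℂ)) hc2
  have hω4 : ((ω:ℂ) + 4) ≠ 0 := by
    intro h; have := congrArg Complex.re h; simp at this; linarith
  have hω0' : ((ω:ℂ)) ≠ 0 := by exact_mod_cast hω.ne'
  have hsum : phat ω 0 + qhat ω 0 = 2 / ((ω:ℂ) + 4) := by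
    rw [hp0, hq0, div_add_div _ _ hu hv, div_eq_div_iff (mul_ne_zero hu hv) hω4]
    linear_combination (-8:ℂ) * hcc + 8 * (c:ℂ)^2 * Complex.I_sq
  have hprod : phat ω 0 * qhat ω 0 = 1 / ((ω:ℂ) * ((ω:ℂ) + 4)) := by
    rw [hp0, hq0, div_mul_div_comm, one_mul]
    rw [div_eq_div_iff (mul_ne_zero hu hv) (mul_ne_zero hω0' hω4)]
    linear_combination (-4:ℂ) * hcc + 4 * (c:ℂ)^2 * Complex.I_sq
  have hD : Dfun E0 γ ω P 0
      = ((sigmaPar E0 γ ω)^2 * (3*P^2 - 4*P + 1) + 4*γ^4/(ω*(ω+4)^2) : ℝ) := by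
    unfold Dfun
    rw [show Complex.I * (0:ℂ) = 0 by ring, sub_zero, add_zero]
    have hexp : (((ω - E0 : ℝ) : ℂ) - (γ:ℂ)^2 * qhat ω 0) * (((ω - E0 : ℝ) : ℂ) - (γ:ℂ)^2 * phat ω 0)
        = ((ω - E0 : ℝ) : ℂ)^2 - ((ω - E0 : ℝ) : ℂ) * (γ:ℂ)^2 * (phat ω 0 + qhat ω 0)
          + (γ:ℂ)^4 * (phat ω 0 * qhat ω 0) := by ring
    rw [hexp, hsum, hprod]
    unfold sigmaPar
    push_cast
    field_simp
    ring
  rw [hD, Complex.ofReal_re]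


lemma abs_sub_le' (a b : ℂ) : ‖a - b‖ ≤ ‖a‖ + ‖b‖ := by
  exact norm_sub_le a b


set_option maxHeartbeats 1000000 in
/-- linear instability of the harmonic solution with intermediate
response: if the cubic `f` has three distinct real roots `P1 < P2 < P3` and
`γ, μ` are small, then `D_{P2}` has a zero with positive real part. -/
theorem intermediate_response_linearly_unstable
    (E0 ω : ℝ) (hE0 : 0 < E0) (hω : E0 < ω) :
    ∃ γ0 > 0, ∃ μ0 > 0, ∀ γ : ℝ, 0 < γ → γ < γ0 → ∀ μ : ℝ, 0 < μ → μ < μ0 →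
      ∀ P1 P2 P3 : ℝ, P1 < P2 → P2 < P3 →
        cubicF (alphaPar E0 γ ω) (betaPar E0 γ μ ω) P1 = 0 →
        cubicF (alphaPar E0 γ ω) (betaPar E0 γ μ ω) P2 = 0 →
        cubicF (alphaPar E0 γ ω) (betaPar E0 γ μ ω) P3 = 0 →
        ∃ s : ℂ, 0 < s.re ∧ Dfun E0 γ ω P2 s = 0 := by
  have hω0 : 0 < ω := hE0.trans hω
  have hρ : (0:ℝ) < ω + 4 := by linarith
  refine ⟨Real.sqrt ((ω - E0) * (ω + 4)), Real.sqrt_pos.mpr (by nlinarith), 1, one_pos, ?_⟩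
  intro γ hγ0 hγ1 μ hμ0 hμ1 P1 P2 P3 h12 h23 e1 e2 e3
  have hγsq : γ^2 < (ω - E0) * (ω + 4) := by
    have h := Real.sq_sqrt (by nlinarith : (0:ℝ) ≤ (ω - E0) * (ω + 4))
    nlinarith
  have hS : 0 < sigmaPar E0 γ ω := by
    unfold sigmaPar
    have h2 : γ^2 / (ω + 4) < ω - E0 := by rw [div_lt_iff₀ hρ]; nlinarith
    linarith
  have hder : (P2 - P1) * (P2 - P3) < 0 :=
    mul_neg_of_pos_of_neg (sub_pos.mpr h12) (sub_neg.mpr h23)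
  have hder2 : 3*P2^2 - 4*P2 + 1 + alphaPar E0 γ ω = (P2 - P1)*(P2 - P3) :=
    middle_root _ _ _ _ _ h12 h23 e1 e2 e3
  have hg0 : (Dfun E0 γ ω P2 (((0:ℝ)):ℂ)).re < 0 := by
    have h0 := Dfun_zero E0 γ ω P2 hω0
    have hα : (sigmaPar E0 γ ω)^2 * alphaPar E0 γ ω = 4*γ^4/(ω*(ω+4)^2) := by
      unfold alphaPar
      field_simp
    have hval : (Dfun E0 γ ω P2 0).re = (sigmaPar E0 γ ω)^2 * ((P2 - P1)*(P2 - P3)) := by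
      rw [h0, ← hder2, ← hα]; ring
    rw [Complex.ofReal_zero, hval]
    exact mul_neg_of_pos_of_neg (by positivity) hder
  -- constants
  obtain ⟨Cp, hCpdef⟩ : ∃ x : ℝ, x = (Real.sqrt ω + 2) / (Real.sqrt ω * (ω + 4)) := ⟨_, rfl⟩
  have hCp0 : 0 ≤ Cp := by rw [hCpdef]; positivity
  obtain ⟨B, hBdef⟩ : ∃ x : ℝ, x = |ω - E0| + γ^2 * Cp := ⟨_, rfl⟩
  have hB0 : 0 ≤ B := by rw [hBdef]; positivity
  obtain ⟨M, hMdef⟩ : ∃ x : ℝ, x = 4 * |sigmaPar E0 γ ω| * |P2| * B := ⟨_, rfl⟩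
  have hM0 : 0 ≤ M := by rw [hMdef]; positivity
  obtain ⟨T, hTdef⟩ : ∃ x : ℝ, x = B + M + 1 := ⟨_, rfl⟩
  have hT0 : (0:ℝ) ≤ T := by rw [hTdef]; linarith
  have hγ2 : (0:ℝ) ≤ γ^2 := sq_nonneg γ
  -- value at T
  have hgT : 0 < (Dfun E0 γ ω P2 ((T:ℝ):ℂ)).re := by
    have hqb := abs_qhat_le ω hω0 T
    have hpb := abs_phat_le ω hω0 T
    rw [← hCpdef] at hqb hpb
    have hzconj : (starRingEnd ℂ) (((ω - E0:ℝ):ℂ) - Complex.I*((T:ℝ):ℂ) - (γ:ℂ)^2*qhat ω ((T:ℝ):ℂ))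
        = ((ω - E0:ℝ):ℂ) + Complex.I*((T:ℝ):ℂ) - (γ:ℂ)^2*phat ω ((T:ℝ):ℂ) := by
      rw [map_sub, map_sub, map_mul, map_mul, map_pow, Complex.conj_I, conj_qhat ω hω0 T]
      simp only [Complex.conj_ofReal]
      ring
    have hterm3 : (((ω - E0:ℝ):ℂ) - Complex.I*((T:ℝ):ℂ) - (γ:ℂ)^2*qhat ω ((T:ℝ):ℂ))
        * (((ω - E0:ℝ):ℂ) + Complex.I*((T:ℝ):ℂ) - (γ:ℂ)^2*phat ω ((T:ℝ):ℂ))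
        = ((Complex.normSq (((ω - E0:ℝ):ℂ) - Complex.I*((T:ℝ):ℂ) - (γ:ℂ)^2*qhat ω ((T:ℝ):ℂ)) : ℝ):ℂ) := by
      rw [← hzconj, Complex.mul_conj]
    have hcons : 3*((sigmaPar E0 γ ω : ℝ):ℂ)^2*((P2:ℝ):ℂ)^2
        = ((3*(sigmaPar E0 γ ω)^2*P2^2 : ℝ):ℂ) := by push_cast; ring
    unfold Dfun
    rw [hterm3, hcons, Complex.add_re, Complex.sub_re, Complex.ofReal_re, Complex.ofReal_re]
    have habsg : ‖(γ:ℂ)^2/2‖ = γ^2/2 := by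
      rw [norm_div, norm_pow, Complex.norm_real, Real.norm_eq_abs, _root_.sq_abs, Complex.norm_two]
    have hpqsum : ‖phat ω ((T:ℝ):ℂ) + qhat ω ((T:ℝ):ℂ)‖ ≤ 2 * Cp := by
      have := norm_add_le (phat ω ((T:ℝ):ℂ)) (qhat ω ((T:ℝ):ℂ))
      linarith
    have h1 : ‖((ω - E0:ℝ):ℂ) - ((γ:ℂ)^2/2) * (phat ω ((T:ℝ):ℂ) + qhat ω ((T:ℝ):ℂ))‖ ≤ B := by
      have t1 := abs_sub_le' (((ω - E0:ℝ):ℂ)) (((γ:ℂ)^2/2) * (phat ω ((T:ℝ):ℂ) + qhat ω ((T:ℝ):ℂ)))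
      rw [norm_mul, habsg, Complex.norm_real, Real.norm_eq_abs] at t1
      have t2 : (γ^2/2) * ‖phat ω ((T:ℝ):ℂ) + qhat ω ((T:ℝ):ℂ)‖ ≤ (γ^2/2) * (2*Cp) := by
        apply mul_le_mul_of_nonneg_left hpqsum (by positivity)
      have t3 : (γ^2/2) * (2*Cp) = γ^2 * Cp := by ring
      rw [hBdef]
      linarith
    have hYre : (4 * ((sigmaPar E0 γ ω : ℝ):ℂ) * ((P2:ℝ):ℂ)
        * (((ω - E0:ℝ):ℂ) - ((γ:ℂ)^2/2) * (phat ω ((T:ℝ):ℂ) + qhat ω ((T:ℝ):ℂ)))).re ≤ M := by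
      have habs : ‖4 * ((sigmaPar E0 γ ω : ℝ):ℂ) * ((P2:ℝ):ℂ)
          * (((ω - E0:ℝ):ℂ) - ((γ:ℂ)^2/2) * (phat ω ((T:ℝ):ℂ) + qhat ω ((T:ℝ):ℂ)))‖
          = 4 * |sigmaPar E0 γ ω| * |P2|
            * ‖((ω - E0:ℝ):ℂ) - ((γ:ℂ)^2/2) * (phat ω ((T:ℝ):ℂ) + qhat ω ((T:ℝ):ℂ))‖ := by
        rw [norm_mul, norm_mul, norm_mul, Complex.norm_real, Real.norm_eq_abs, Complex.norm_real, Real.norm_eq_abs, Complex.norm_ofNat]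
      have hre := Complex.re_le_norm (4 * ((sigmaPar E0 γ ω : ℝ):ℂ) * ((P2:ℝ):ℂ)
          * (((ω - E0:ℝ):ℂ) - ((γ:ℂ)^2/2) * (phat ω ((T:ℝ):ℂ) + qhat ω ((T:ℝ):ℂ))))
      rw [habs] at hre
      have := mul_le_mul_of_nonneg_left h1 (by positivity : (0:ℝ) ≤ 4 * |sigmaPar E0 γ ω| * |P2|)
      rw [hMdef]
      linarith
    have habsg2 : ‖(γ:ℂ)^2‖ = γ^2 := by
      rw [norm_pow, Complex.norm_real, Real.norm_eq_abs, _root_.sq_abs]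
    have h2 : ‖((ω - E0:ℝ):ℂ) - (γ:ℂ)^2 * qhat ω ((T:ℝ):ℂ)‖ ≤ B := by
      have t1 := abs_sub_le' (((ω - E0:ℝ):ℂ)) ((γ:ℂ)^2 * qhat ω ((T:ℝ):ℂ))
      rw [norm_mul, habsg2, Complex.norm_real, Real.norm_eq_abs] at t1
      have t2 : γ^2 * ‖qhat ω ((T:ℝ):ℂ)‖ ≤ γ^2 * Cp :=
        mul_le_mul_of_nonneg_left hqb hγ2
      rw [hBdef]
      linarith
    have habsz : M + 1 ≤ ‖((ω - E0:ℝ):ℂ) - Complex.I*((T:ℝ):ℂ) - (γ:ℂ)^2*qhat ω ((T:ℝ):ℂ)‖ := by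
      have h3 : ‖Complex.I * ((T:ℝ):ℂ)‖ = T := by
        rw [norm_mul, Complex.norm_I, Complex.norm_real, Real.norm_eq_abs, one_mul, _root_.abs_of_nonneg hT0]
      have h5 : Complex.I * ((T:ℝ):ℂ) - (((ω - E0:ℝ):ℂ) - (γ:ℂ)^2 * qhat ω ((T:ℝ):ℂ))
          = -(((ω - E0:ℝ):ℂ) - Complex.I*((T:ℝ):ℂ) - (γ:ℂ)^2*qhat ω ((T:ℝ):ℂ)) := by ring
      have h4 := norm_sub_norm_le (Complex.I * ((T:ℝ):ℂ)) (((ω - E0:ℝ):ℂ) - (γ:ℂ)^2 * qhat ω ((T:ℝ):ℂ))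
      rw [h5, norm_neg, h3] at h4
      have hTB : T - B = M + 1 := by rw [hTdef]; ring
      linarith
    have hnormSq : (M+1)^2 ≤ Complex.normSq (((ω - E0:ℝ):ℂ) - Complex.I*((T:ℝ):ℂ) - (γ:ℂ)^2*qhat ω ((T:ℝ):ℂ)) := by
      rw [Complex.normSq_eq_norm_sq]
      have hnn := norm_nonneg (((ω - E0:ℝ):ℂ) - Complex.I*((T:ℝ):ℂ) - (γ:ℂ)^2*qhat ω ((T:ℝ):ℂ))
      nlinarith
    nlinarith [sq_nonneg (sigmaPar E0 γ ω * P2)]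
  -- continuity
  have hcont : Continuous fun s : ℝ => (Dfun E0 γ ω P2 ↑s).re := by
    apply Complex.continuous_re.comp
    have hp := continuous_phat ω hω0
    have hq := continuous_qhat ω hω0
    have hIs : Continuous fun s : ℝ => Complex.I * (s:ℂ) :=
      continuous_const.mul Complex.continuous_ofReal
    unfold Dfun
    exact Continuous.add
      (Continuous.sub continuous_const
        (continuous_const.mul
          (Continuous.sub continuous_const (continuous_const.mul (hp.add hq)))))
      (Continuous.mul
        (Continuous.sub (Continuous.sub continuous_const hIs) (continuous_const.mul hq))
        (Continuous.sub (Continuous.add continuous_const hIs) (continuous_const.mul hp)))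
  -- IVT
  have hIVT := intermediate_value_Icc hT0 hcont.continuousOn
  have h0mem : (0:ℝ) ∈ Set.Icc ((fun s : ℝ => (Dfun E0 γ ω P2 ↑s).re) 0)
      ((fun s : ℝ => (Dfun E0 γ ω P2 ↑s).re) T) := ⟨hg0.le, hgT.le⟩
  obtain ⟨s0, hs0mem, hgs0⟩ := hIVT h0mem
  simp only at hgs0
  have hs0pos : 0 < s0 := by
    rcases lt_or_eq_of_le hs0mem.1 with h | h
    · exact h
    · exfalso
      rw [← h] at hgs0
      rw [hgs0] at hg0
      exact lt_irrefl 0 hg0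
  refine ⟨(s0:ℂ), by simpa using hs0pos, ?_⟩
  apply Complex.ext
  · simpa using hgs0
  · simpa using im_Dfun_real E0 γ ω P2 hω0 s0
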